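/- arXiv:2211.04207 — 3 statements merged into one kernel-verified Lean document; each statement's English description precedes it below -/
import Mathlib

section
/- Let Ω be a bounded open subset of ℝⁿ and let μ and ν be probability measures on ℝⁿ supported in Ω, each absolutely continuous with respect to Lebesgue measure with bounded density. Then there exists a convex function φ : ℝⁿ → ℝ, differentiable on a Borel set of full μ-measure, such that: (i) the pushforward of μ under the map x ↦ ∇φ(x) equals ν; (ii) the map ∇φ minimizes the Monge cost M(T) = ∫ |x − T(x)|² dμ(x) among all Borel measurable maps T : ℝⁿ → ℝⁿ with T_#μ = ν; and (iii) any Borel measurable map T with T_#μ = ν achieving the minimal cost satisfies T(x) = ∇φ(x) for μ-almost every x. -/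
open MeasureTheory

open MeasureTheory Set Filter
open scoped RealInnerProductSpace Topology BoundedContinuousFunction

noncomputable section
namespace BrenierAux

variable {F : Type*} [NormedAddCommGroup F] [InnerProductSpace ℝ F]

/-- transform: `str K f y = sup_{q ∈ K} (⟪q, y⟫ - f q)`. -/
def str (K : Set F) (f : K → ℝ) (y : F) : ℝ :=
  sSup (Set.range fun q : K => ⟪(q : F), y⟫ - f q)

variable {K : Set F} {f g : K → ℝ}

theorem str_isGreatest (hK : IsCompact K) (hne : K.Nonempty) (hf : Continuous f) (y : F) :
    IsGreatest (Set.range fun q : K => ⟪(q : F), y⟫ - f q) (str K f y) := by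
  haveI : CompactSpace K := isCompact_iff_compactSpace.mp hK
  haveI : Nonempty K := hne.to_subtype
  have hc : Continuous fun q : K => ⟪(q : F), y⟫ - f q :=
    (continuous_subtype_val.inner continuous_const).sub hf
  have hcomp : IsCompact (Set.range fun q : K => ⟪(q : F), y⟫ - f q) :=
    isCompact_range hc
  exact ⟨hcomp.sSup_mem (Set.range_nonempty _), fun z hz => le_csSup hcomp.bddAbove hz⟩

theorem le_str (hK : IsCompact K) (hne : K.Nonempty) (hf : Continuous f) (q : K) (y : F) :
    ⟪(q : F), y⟫ - f q ≤ str K f y :=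
  (str_isGreatest hK hne hf y).2 ⟨q, rfl⟩

theorem exists_str_eq (hK : IsCompact K) (hne : K.Nonempty) (hf : Continuous f) (y : F) :
    ∃ q : K, str K f y = ⟪(q : F), y⟫ - f q := by
  obtain ⟨q, hq⟩ := (str_isGreatest hK hne hf y).1
  exact ⟨q, hq.symm⟩

theorem str_le (hne : K.Nonempty) {y : F} {c : ℝ}
    (h : ∀ q : K, ⟪(q : F), y⟫ - f q ≤ c) : str K f y ≤ c := by
  haveI : Nonempty K := hne.to_subtype
  exact csSup_le (Set.range_nonempty _) (by rintro z ⟨q, rfl⟩; exact h q)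

theorem str_antitone (hK : IsCompact K) (hne : K.Nonempty) (hf : Continuous f)
    (hfg : ∀ q, f q ≤ g q) (y : F) : str K g y ≤ str K f y :=
  str_le hne fun q => le_trans (by linarith [hfg q]) (le_str hK hne hf q y)

/-- `str` is `R`-Lipschitz if `K` is contained in the ball of radius `R`. -/
theorem lipschitz_str (hK : IsCompact K) (hne : K.Nonempty) (hf : Continuous f)
    {R : NNReal} (hR : ∀ x ∈ K, ‖x‖ ≤ R) : LipschitzWith R (str K f) := by
  apply LipschitzWith.of_dist_le_mul
  have key : ∀ y z : F, str K f y - str K f z ≤ R * ‖y - z‖ := by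
    intro y z
    obtain ⟨q, hq⟩ := exists_str_eq hK hne hf y
    have h1 : ⟪(q : F), z⟫ - f q ≤ str K f z := le_str hK hne hf q z
    have h2 : ⟪(q : F), y⟫ - ⟪(q : F), z⟫ ≤ R * ‖y - z‖ := by
      rw [← inner_sub_right]
      calc ⟪(q : F), y - z⟫ ≤ ‖(q : F)‖ * ‖y - z‖ := real_inner_le_norm _ _
        _ ≤ R * ‖y - z‖ := by gcongr; exact hR _ q.2
    linarith
  intro y z
  rw [Real.dist_eq, dist_eq_norm, abs_le]
  have h1 := key y z
  have h2 := key z y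
  rw [norm_sub_rev] at h2
  constructor <;> linarith

/-- `str` is 1-Lipschitz with respect to uniform perturbations of `f`. -/
theorem str_sub_str_le (hK : IsCompact K) (hne : K.Nonempty) (hf : Continuous f)
    (hg : Continuous g) {c : ℝ} (h : ∀ q, |f q - g q| ≤ c) (y : F) :
    |str K f y - str K g y| ≤ c := by
  have key : ∀ (u v : K → ℝ), Continuous u → Continuous v → (∀ q, |u q - v q| ≤ c) →
      str K u y - str K v y ≤ c := by
    intro u v hu hv huv
    obtain ⟨q, hq⟩ := exists_str_eq hK hne hu y
    have h1 : ⟪(q : F), y⟫ - v q ≤ str K v y := le_str hK hne hv q y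
    have := huv q
    rw [abs_le] at this
    obtain ⟨l, r⟩ := this
    linarith
  have h1 := key f g hf hg h
  have h2 := key g f hg hf (fun q => by rw [abs_sub_comm]; exact h q)
  rw [abs_le]; constructor <;> linarith

theorem str_add_const (hK : IsCompact K) (hne : K.Nonempty) (hf : Continuous f) (c : ℝ) (y : F) :
    str K (fun q => f q + c) y = str K f y - c := by
  have hfc : Continuous fun q : K => f q + c := by fun_prop
  have h1 : str K (fun q => f q + c) y ≤ str K f y - c :=
    str_le hne fun q => by linarith [le_str hK hne hf q y]
  have h2 : str K f y - c ≤ str K (fun q => f q + c) y := by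
    have := str_le hne (f := f) (c := str K (fun q => f q + c) y + c)
      (fun q => by linarith [le_str hK hne hfc q y])
    linarith
  linarith

theorem convexOn_str (hK : IsCompact K) (hne : K.Nonempty) (hf : Continuous f) :
    ConvexOn ℝ Set.univ (str K f) := by
  refine ⟨convex_univ, fun x _ y _ a b ha hb hab => ?_⟩
  obtain ⟨q, hq⟩ := exists_str_eq hK hne hf (a • x + b • y)
  rw [hq]
  have hsplit : ⟪(q : F), a • x + b • y⟫ = a * ⟪(q : F), x⟫ + b * ⟪(q : F), y⟫ := by
    rw [inner_add_right, real_inner_smul_right, real_inner_smul_right]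
  rw [hsplit, smul_eq_mul, smul_eq_mul]
  have h1 := le_str hK hne hf q x
  have h2 := le_str hK hne hf q y
  have h3 : a * f q + b * f q = f q := by rw [← add_mul, hab, one_mul]
  linarith [mul_le_mul_of_nonneg_left h1 ha, mul_le_mul_of_nonneg_left h2 hb]

theorem continuous_str (hK : IsCompact K) (hne : K.Nonempty) (hf : Continuous f) :
    Continuous (str K f) := by
  obtain ⟨R, hR⟩ := hK.isBounded.subset_closedBall 0
  have hR' : ∀ x ∈ K, ‖x‖ ≤ R.toNNReal := by
    intro x hx
    have := hR hx
    rw [Metric.mem_closedBall, dist_zero_right] at this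
    exact this.trans (Real.le_coe_toNNReal R)
  exact (lipschitz_str hK hne hf hR').continuous

/-- the "double transform back on K" operator. -/
def Dop (K : Set F) (f : K → ℝ) : K → ℝ := fun q => str K f (q : F)

theorem continuous_Dop (hK : IsCompact K) (hne : K.Nonempty) (hf : Continuous f) :
    Continuous (Dop K f) :=
  (continuous_str hK hne hf).comp continuous_subtype_val

theorem DD_le (hK : IsCompact K) (hne : K.Nonempty) (hf : Continuous f) (q : K) :
    Dop K (Dop K f) q ≤ f q := by
  apply str_le hne
  intro p
  have := le_str hK hne hf q (p : F)
  have hsymm : ⟪(p : F), (q : F)⟫ = ⟪(q : F), (p : F)⟫ := real_inner_comm _ _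
  unfold Dop
  linarith [le_str hK hne hf q (p : F), hsymm ▸ (le_str hK hne hf q (p : F))]

theorem str_DD_eq_on (hK : IsCompact K) (hne : K.Nonempty) (hf : Continuous f) (q : K) :
    str K (Dop K (Dop K f)) (q : F) = str K f (q : F) := by
  have h1 : str K f (q : F) ≤ str K (Dop K (Dop K f)) (q : F) :=
    str_antitone hK hne (continuous_Dop hK hne (continuous_Dop hK hne hf))
      (fun p => DD_le hK hne hf p) (q : F)
  have h2 : str K (Dop K (Dop K f)) (q : F) ≤ str K f (q : F) := by
    have := DD_le hK hne (continuous_Dop hK hne hf) q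
    unfold Dop at this ⊢
    exact this
  linarith

open Filter
open scoped Topology BoundedContinuousFunction

variable [CompleteSpace F]

/-- If `φ z ≥ ⟪y,z⟫ - c` globally with equality at `x`, and `φ` is differentiable at `x`,
then `y` is the gradient of `φ` at `x`. -/
theorem eq_gradient_of_touch {φ : F → ℝ} {x y : F} {c : ℝ}
    (hglob : ∀ z, ⟪y, z⟫ - c ≤ φ z) (heq : φ x = ⟪y, x⟫ - c)
    (hd : DifferentiableAt ℝ φ x) : gradient φ x = y := by
  have hdiff : DifferentiableAt ℝ (fun z => φ z - (innerSL ℝ y) z) x :=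
    hd.sub ((innerSL ℝ y).differentiable.differentiableAt)
  have hmin : IsLocalMin (fun z => φ z - (innerSL ℝ y) z) x := by
    have hmo : IsMinOn (fun z => φ z - (innerSL ℝ y) z) Set.univ x := by
      intro z _
      simp only [innerSL_apply_apply, heq]
      have := hglob z
      simp only [Set.mem_setOf_eq]
      linarith
    exact hmo.isLocalMin univ_mem
  have hzero : fderiv ℝ (fun z => φ z - (innerSL ℝ y) z) x = 0 := hmin.fderiv_eq_zero
  have hsub : fderiv ℝ (fun z => φ z - (innerSL ℝ y) z) x
      = fderiv ℝ φ x - innerSL ℝ y := by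
    rw [fderiv_fun_sub hd ((innerSL ℝ y).differentiable.differentiableAt),
      (innerSL ℝ y).fderiv]
  have hfd : fderiv ℝ φ x = innerSL ℝ y := by
    have h2 : fderiv ℝ φ x - innerSL ℝ y = 0 := hsub ▸ hzero
    rwa [sub_eq_zero] at h2
  have : HasGradientAt φ y x := by
    rw [hasGradientAt_iff_hasFDerivAt]
    have h3 : InnerProductSpace.toDual ℝ F y = innerSL ℝ y := rfl
    rw [h3, ← hfd]
    exact hd.hasFDerivAt
  exact this.gradient

/-- At a differentiability point of `str K f`, every maximizer equals the gradient. -/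
theorem maximizer_eq_gradient (hK : IsCompact K) (hne : K.Nonempty) (hf : Continuous f)
    {x : F} (hd : DifferentiableAt ℝ (str K f) x) {q : K}
    (hq : str K f x = ⟪(q : F), x⟫ - f q) : gradient (str K f) x = (q : F) :=
  eq_gradient_of_touch (fun z => le_str hK hne hf q z) hq hd

/-- Danskin-type lemma: derivative of the perturbed sup at a differentiability point. -/
theorem danskin (hK : IsCompact K) (hne : K.Nonempty) (hf : Continuous f)
    (ζ : F →ᵇ ℝ) {x : F} (hd : DifferentiableAt ℝ (str K f) x) :
    Tendsto (fun t : ℝ => (str K (fun q => f q + t * ζ (q : F)) x - str K f x) / t)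
      (𝓝[≠] (0 : ℝ)) (𝓝 (- ζ (gradient (str K f) x))) := by
  haveI : CompactSpace K := isCompact_iff_compactSpace.mp hK
  haveI : Nonempty K := hne.to_subtype
  obtain ⟨q₀, hq₀⟩ := exists_str_eq hK hne hf x
  have hgrad : gradient (str K f) x = (q₀ : F) := maximizer_eq_gradient hK hne hf hd hq₀
  rw [hgrad]
  have hft : ∀ t : ℝ, Continuous fun q : K => f q + t * ζ (q : F) := fun t =>
    hf.add (continuous_const.mul (ζ.continuous.comp continuous_subtype_val))
  rw [Metric.tendsto_nhdsWithin_nhds]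
  intro ε hε
  -- δ₁ : continuity of ζ at q₀
  have hcont : ContinuousAt ζ (q₀ : F) := ζ.continuous.continuousAt
  obtain ⟨δ₁, hδ₁pos, hδ₁⟩ := Metric.continuousAt_iff.mp hcont ε hε
  -- claim: for |t| small, every maximizer at level t is within δ₁ of q₀
  have key : ∃ δ₂ > 0, ∀ t : ℝ, |t| < δ₂ → ∀ q : K,
      str K (fun q => f q + t * ζ (q : F)) x = ⟪(q : F), x⟫ - (f q + t * ζ (q : F)) →
      dist (q : F) (q₀ : F) < δ₁ := by
    by_cases hS : ∃ p : K, ¬ dist (p : F) (q₀ : F) < δ₁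
    · -- S nonempty: strict gap
      set S : Set K := {p : K | ¬ dist (p : F) (q₀ : F) < δ₁} with hSdef
      have hScl : IsClosed S := by
        have : Continuous fun p : K => dist (p : F) (q₀ : F) :=
          (continuous_subtype_val.dist continuous_const)
        simpa [hSdef, not_lt] using isClosed_le (g := fun p : K => dist (p : F) (q₀ : F))
          continuous_const this
      have hScomp : IsCompact S := hScl.isCompact
      obtain ⟨p₀, hp₀S, hp₀max⟩ := hScomp.exists_isMaxOn hS
        ((continuous_subtype_val.inner continuous_const).sub hf).continuousOn
      set m : ℝ := ⟪(p₀ : F), x⟫ - f p₀ with hm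
      have hmlt : m < str K f x := by
        rcases lt_or_eq_of_le (le_str hK hne hf p₀ x) with h | h
        · exact h
        · exfalso
          have hpeq : gradient (str K f) x = (p₀ : F) :=
            maximizer_eq_gradient hK hne hf hd h.symm
          have hpq : (p₀ : F) = (q₀ : F) := by rw [← hpeq, hgrad]
          exact hp₀S (by rw [hpq, dist_self]; exact hδ₁pos)
      have hposm : 0 < str K f x - m := by linarith
      refine ⟨(str K f x - m) / (2 * (‖ζ‖ + 1)), div_pos hposm (by positivity),
        fun t ht q hqmax => ?_⟩
      by_contra hfar
      have hqS : q ∈ S := hfar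
      have hb1 : |ζ (q : F)| ≤ ‖ζ‖ := ζ.norm_coe_le_norm _
      have hb0 : |ζ (q₀ : F)| ≤ ‖ζ‖ := ζ.norm_coe_le_norm _
      have habs : t * ζ (q₀ : F) ≤ |t| * ‖ζ‖ := by
        calc t * ζ (q₀ : F) ≤ |t * ζ (q₀ : F)| := le_abs_self _
          _ = |t| * |ζ (q₀ : F)| := abs_mul _ _
          _ ≤ |t| * ‖ζ‖ := by gcongr
      have hl : str K f x - |t| * ‖ζ‖ ≤ str K (fun q => f q + t * ζ (q : F)) x := by
        have h5 := le_str hK hne (hft t) q₀ x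
        rw [hq₀]
        linarith
      have hval : ⟪(q : F), x⟫ - f q ≤ m := hp₀max hqS
      have habs2 : -(t * ζ (q : F)) ≤ |t| * ‖ζ‖ := by
        calc -(t * ζ (q : F)) ≤ |t * ζ (q : F)| := neg_le_abs _
          _ = |t| * |ζ (q : F)| := abs_mul _ _
          _ ≤ |t| * ‖ζ‖ := by gcongr
      have hcontr : str K f x - 2 * (|t| * ‖ζ‖) ≤ m := by linarith [hl, hval, habs2, hqmax]
      rw [lt_div_iff₀ (by positivity : (0:ℝ) < 2 * (‖ζ‖ + 1))] at ht
      nlinarith [abs_nonneg t, norm_nonneg ζ]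
    · push_neg at hS
      exact ⟨1, one_pos, fun t _ q _ => hS q⟩
  obtain ⟨δ₂, hδ₂pos, hδ₂⟩ := key
  refine ⟨δ₂, hδ₂pos, fun {t} htne htd => ?_⟩
  rw [Real.dist_eq, sub_zero] at htd
  have htne' : (t : ℝ) ≠ 0 := htne
  obtain ⟨qt, hqt⟩ := exists_str_eq hK hne (hft t) x
  have hqtclose : dist (qt : F) (q₀ : F) < δ₁ := hδ₂ t htd qt hqt
  have hζclose : |ζ (qt : F) - ζ (q₀ : F)| < ε := by
    have := hδ₁ hqtclose
    rwa [Real.dist_eq] at this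
  have hA1 : str K f x - t * ζ (q₀ : F) ≤ str K (fun q => f q + t * ζ (q : F)) x := by
    have h5 := le_str hK hne (hft t) q₀ x
    rw [hq₀]
    linarith
  have hA2 : str K (fun q => f q + t * ζ (q : F)) x ≤ str K f x - t * ζ (qt : F) := by
    have h5 := le_str hK hne hf qt x
    rw [hqt]
    linarith
  rw [Real.dist_eq]
  set Q := (str K (fun q => f q + t * ζ (q : F)) x - str K f x) / t with hQ
  have hQabs : |Q - (- ζ (q₀ : F))| ≤ |ζ (qt : F) - ζ (q₀ : F)| := by
    rcases lt_or_gt_of_ne htne' with hneg | hpos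
    · have h1 : Q ≤ -ζ (q₀ : F) := by
        rw [hQ, div_le_iff_of_neg hneg]
        linarith [hA1]
      have h2 : - ζ (qt : F) ≤ Q := by
        rw [hQ, le_div_iff_of_neg hneg]
        linarith [hA2]
      rw [abs_le]
      constructor
      · linarith [le_abs_self (ζ (qt : F) - ζ (q₀ : F))]
      · linarith [abs_nonneg (ζ (qt : F) - ζ (q₀ : F))]
    · have h1 : -ζ (q₀ : F) ≤ Q := by
        rw [hQ, le_div_iff₀ hpos]
        linarith [hA1]
      have h2 : Q ≤ - ζ (qt : F) := by
        rw [hQ, div_le_iff₀ hpos]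
        linarith [hA2]
      rw [abs_le]
      constructor
      · linarith [abs_nonneg (ζ (qt : F) - ζ (q₀ : F))]
      · linarith [neg_abs_le (ζ (qt : F) - ζ (q₀ : F))]
  calc |Q - (- ζ (q₀ : F))| ≤ |ζ (qt : F) - ζ (q₀ : F)| := hQabs
    _ < ε := hζclose

section Measures
open scoped NNReal

theorem ae_mem_of_compl_null {α : Type*} [MeasurableSpace α] {μ : Measure α} {s : Set α}
    (h : μ sᶜ = 0) : ∀ᵐ x ∂μ, x ∈ s := by
  rw [MeasureTheory.ae_iff]
  exact h

variable [MeasurableSpace F] [BorelSpace F]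

/-- a continuous function is integrable w.r.t. a finite measure concentrated on a compact set. -/
theorem integrable_of_continuous (hK : IsCompact K) {μ : Measure F} [IsFiniteMeasure μ]
    (hμK : μ Kᶜ = 0) {u : F → ℝ} (hu : Continuous u) : Integrable u μ := by
  obtain ⟨C, hC⟩ := hK.exists_bound_of_continuousOn hu.continuousOn
  refine Integrable.mono' (integrable_const C) hu.aestronglyMeasurable ?_
  filter_upwards [ae_mem_of_compl_null hμK] with x hx
  exact hC x hx

/-- the dual functional. -/
def Gf (μ ν : Measure F) (K : Set F) (g : K → ℝ) : ℝ :=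
  ∫ x, str K g x ∂μ + ∫ y, str K (Dop K g) y ∂ν

theorem global_min (hK : IsCompact K) (hne : K.Nonempty)
    {R : ℝ≥0} (hR : ∀ x ∈ K, ‖x‖ ≤ R)
    (μ ν : Measure F) [IsProbabilityMeasure μ] [IsProbabilityMeasure ν]
    (hμK : μ Kᶜ = 0) (hνK : ν Kᶜ = 0) :
    ∃ f : K → ℝ, Continuous f ∧ Dop K (Dop K f) = f ∧
      ∀ v : K → ℝ, Continuous v → Gf μ ν K f ≤ Gf μ ν K v := by
  haveI : CompactSpace K := isCompact_iff_compactSpace.mp hK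
  haveI : Nonempty K := hne.to_subtype
  obtain ⟨q₀, hq₀K⟩ := id hne
  -- `Dop` of a continuous function is `R`-Lipschitz
  have lipDop : ∀ {u : K → ℝ}, Continuous u → LipschitzWith R (Dop K u) := by
    intro u hu
    have h := lipschitz_str hK hne hu hR
    apply LipschitzWith.of_dist_le_mul
    intro q p
    calc dist (str K u (q : F)) (str K u (p : F)) ≤ R * dist (q : F) (p : F) :=
          h.dist_le_mul _ _
      _ = R * dist q p := by rw [Subtype.dist_eq]
  -- the integrals are insensitive to replacing `g` by its double transform
  have Gf_DD : ∀ (g : K → ℝ), Continuous g → Gf μ ν K (Dop K (Dop K g)) = Gf μ ν K g := by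
    intro g hg
    have hDD : Continuous (Dop K (Dop K g)) := continuous_Dop hK hne (continuous_Dop hK hne hg)
    unfold Gf
    have h1 : ∫ x, str K (Dop K (Dop K g)) x ∂μ = ∫ x, str K g x ∂μ := by
      apply integral_congr_ae
      filter_upwards [ae_mem_of_compl_null hμK] with x hx
      exact str_DD_eq_on hK hne hg ⟨x, hx⟩
    have h2 : Dop K (Dop K (Dop K g)) = Dop K g := by
      funext q
      exact str_DD_eq_on hK hne hg q
    rw [h1, h2]
  -- shifting by a constant does not change `Gf`
  have Gf_shift : ∀ (g : K → ℝ), Continuous g → ∀ c : ℝ,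
      Gf μ ν K (fun q => g q + c) = Gf μ ν K g := by
    intro g hg c
    unfold Gf
    have h1 : ∀ x, str K (fun q => g q + c) x = str K g x - c := str_add_const hK hne hg c
    have h2 : Dop K (fun q => g q + c) = fun q => Dop K g q + (-c) := by
      funext q; simp [Dop, h1, sub_eq_add_neg]
    have h3 : ∀ y, str K (Dop K (fun q => g q + c)) y = str K (Dop K g) y + c := by
      intro y
      rw [h2, str_add_const hK hne (continuous_Dop hK hne hg) (-c)]
      ring
    simp only [h1, h3]
    rw [integral_sub (integrable_of_continuous hK hμK (continuous_str hK hne hg))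
      (integrable_const c),
      integral_add (integrable_of_continuous hK hνK
        (continuous_str hK hne (continuous_Dop hK hne hg))) (integrable_const c)]
    simp [integral_const, measure_univ]
  -- the compact set of candidate potentials
  set q0 : K := ⟨q₀, hq₀K⟩ with hq0def
  set A : Set (K →ᵇ ℝ) := {g | LipschitzWith R ⇑g ∧ g q0 = 0} with hAdef
  -- uniform bound for elements of A
  have hdistK : ∀ p q : K, dist p q ≤ 2 * R := by
    intro p q
    rw [Subtype.dist_eq, dist_eq_norm]
    calc ‖(p : F) - (q : F)‖ ≤ ‖(p : F)‖ + ‖(q : F)‖ := norm_sub_le _ _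
      _ ≤ R + R := add_le_add (hR _ p.2) (hR _ q.2)
      _ = 2 * R := by ring
  have in_s : ∀ g : K →ᵇ ℝ, ∀ q : K, g ∈ A → g q ∈ Set.Icc (-(R * (2 * R)) : ℝ) (R * (2 * R)) := by
    intro g q hg
    obtain ⟨hlip, hzero⟩ := hg
    have := hlip.dist_le_mul q q0
    rw [hzero] at this
    have h2 : dist (g q) 0 ≤ R * (2 * R) := by
      have hd := hdistK q q0
      calc dist (g q) 0 = dist (g q) (g q0) := by rw [hzero]
        _ ≤ R * dist q q0 := hlip.dist_le_mul _ _
        _ ≤ R * (2 * R) := by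
            apply mul_le_mul_of_nonneg_left hd
            positivity
    rw [Real.dist_eq, sub_zero, abs_le] at h2
    exact ⟨h2.1, h2.2⟩
  have hAclosed : IsClosed A := by
    have h1 : IsClosed {g : K →ᵇ ℝ | LipschitzWith R ⇑g} := by
      have : {g : K →ᵇ ℝ | LipschitzWith R ⇑g}
          = ⋂ (p : K) (q : K), {g : K →ᵇ ℝ | dist (g p) (g q) ≤ R * dist p q} := by
        ext g
        simp only [Set.mem_setOf_eq, Set.mem_iInter, lipschitzWith_iff_dist_le_mul]
      rw [this]
      refine isClosed_iInter fun p => isClosed_iInter fun q => ?_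
      exact isClosed_le (Continuous.dist
        (continuous_eval_const p)
        (continuous_eval_const q)) continuous_const
    have h2 : IsClosed {g : K →ᵇ ℝ | g q0 = 0} :=
      isClosed_eq (continuous_eval_const q0) continuous_const
    exact h1.inter h2
  have hAequi : Equicontinuous ((↑) : A → K → ℝ) := by
    apply Metric.equicontinuous_of_continuity_modulus (fun d => (R : ℝ) * d)
    · have : Continuous fun d : ℝ => (R : ℝ) * d := by continuity
      simpa using this.tendsto 0
    · rintro x y ⟨g, hgA⟩
      exact hgA.1.dist_le_mul x y
  have hAcomp : IsCompact A :=
    BoundedContinuousFunction.arzela_ascoli₂ (Set.Icc (-(R * (2 * R)) : ℝ) (R * (2 * R)))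
      isCompact_Icc A hAclosed (fun g q hg => in_s g q hg) hAequi
  have hAne : A.Nonempty := by
    refine ⟨0, ⟨?_, rfl⟩⟩
    exact LipschitzWith.const' (0 : ℝ)
  -- continuity of the functional
  have strcont : ∀ g : K →ᵇ ℝ, Continuous (str K ⇑g) := fun g =>
    continuous_str hK hne g.continuous
  have hGlip : LipschitzWith 2 (fun g : K →ᵇ ℝ => Gf μ ν K ⇑g) := by
    apply LipschitzWith.of_dist_le_mul
    intro g g'
    have hgg' : ∀ q : K, |g q - g' q| ≤ dist g g' := fun q => by
      rw [← Real.dist_eq]; exact BoundedContinuousFunction.dist_coe_le_dist q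
    have hb1 : ∀ x, |str K ⇑g x - str K ⇑g' x| ≤ dist g g' := fun x =>
      str_sub_str_le hK hne g.continuous g'.continuous hgg' x
    have hDop : ∀ q : K, |Dop K ⇑g q - Dop K ⇑g' q| ≤ dist g g' := fun q => hb1 (q : F)
    have hb2 : ∀ y, |str K (Dop K ⇑g) y - str K (Dop K ⇑g') y| ≤ dist g g' := fun y =>
      str_sub_str_le hK hne (continuous_Dop hK hne g.continuous)
        (continuous_Dop hK hne g'.continuous) hDop y
    have hi1 : |∫ x, str K ⇑g x ∂μ - ∫ x, str K ⇑g' x ∂μ| ≤ dist g g' := by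
      rw [← integral_sub (integrable_of_continuous hK hμK (strcont g))
        (integrable_of_continuous hK hμK (strcont g'))]
      have := norm_integral_le_of_norm_le_const
        (μ := μ) (f := fun x => str K ⇑g x - str K ⇑g' x) (C := dist g g')
        (Filter.Eventually.of_forall fun x => by
          rw [Real.norm_eq_abs]; exact hb1 x)
      simpa [measure_univ] using this
    have hi2 : |∫ y, str K (Dop K ⇑g) y ∂ν - ∫ y, str K (Dop K ⇑g') y ∂ν| ≤ dist g g' := by
      rw [← integral_sub
        (integrable_of_continuous hK hνK (continuous_str hK hne (continuous_Dop hK hne g.continuous)))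
        (integrable_of_continuous hK hνK (continuous_str hK hne (continuous_Dop hK hne g'.continuous)))]
      have := norm_integral_le_of_norm_le_const
        (μ := ν) (f := fun y => str K (Dop K ⇑g) y - str K (Dop K ⇑g') y) (C := dist g g')
        (Filter.Eventually.of_forall fun y => by
          rw [Real.norm_eq_abs]; exact hb2 y)
      simpa [measure_univ] using this
    rw [Real.dist_eq]
    unfold Gf
    push_cast
    calc |∫ x, str K ⇑g x ∂μ + ∫ y, str K (Dop K ⇑g) y ∂ν
        - (∫ x, str K ⇑g' x ∂μ + ∫ y, str K (Dop K ⇑g') y ∂ν)|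
        ≤ |∫ x, str K ⇑g x ∂μ - ∫ x, str K ⇑g' x ∂μ|
          + |∫ y, str K (Dop K ⇑g) y ∂ν - ∫ y, str K (Dop K ⇑g') y ∂ν| := by
          rw [show ∫ x, str K ⇑g x ∂μ + ∫ y, str K (Dop K ⇑g) y ∂ν
            - (∫ x, str K ⇑g' x ∂μ + ∫ y, str K (Dop K ⇑g') y ∂ν)
            = (∫ x, str K ⇑g x ∂μ - ∫ x, str K ⇑g' x ∂μ)
              + (∫ y, str K (Dop K ⇑g) y ∂ν - ∫ y, str K (Dop K ⇑g') y ∂ν) by ring]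
          exact abs_add_le _ _
      _ ≤ dist g g' + dist g g' := add_le_add hi1 hi2
      _ = 2 * dist g g' := by ring
  -- minimizer over A
  obtain ⟨h, hhA, hhmin⟩ := hAcomp.exists_isMinOn hAne hGlip.continuous.continuousOn
  -- replace by normalized double transform
  set f1 : K → ℝ := Dop K (Dop K ⇑h) with hf1def
  have hf1cont : Continuous f1 := continuous_Dop hK hne (continuous_Dop hK hne h.continuous)
  set c : ℝ := f1 q0 with hcdef
  refine ⟨fun q => f1 q + (-c), by fun_prop, ?_, ?_⟩
  · -- fixed point property
    have Dop_DD : ∀ (g : K → ℝ), Continuous g → Dop K (Dop K (Dop K g)) = Dop K g := by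
      intro g hg
      funext q
      exact str_DD_eq_on hK hne hg q
    have hshift1 : Dop K (fun q => f1 q + (-c)) = fun q => Dop K f1 q + c := by
      funext q
      show str K (fun q => f1 q + (-c)) (q : F) = Dop K f1 q + c
      rw [str_add_const hK hne hf1cont (-c)]
      show str K f1 (q : F) - (-c) = str K f1 (q : F) + c
      ring
    have hshift2 : Dop K (fun q => Dop K f1 q + c) = fun q => Dop K (Dop K f1) q + (-c) := by
      funext q
      show str K (fun q => Dop K f1 q + c) (q : F) = Dop K (Dop K f1) q + (-c)
      rw [str_add_const hK hne (continuous_Dop hK hne hf1cont) c]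
      show str K (Dop K f1) (q : F) - c = str K (Dop K f1) (q : F) + (-c)
      ring
    rw [hshift1, hshift2]
    have hfix : Dop K (Dop K f1) = f1 := by
      rw [hf1def]
      exact Dop_DD (Dop K ⇑h) (continuous_Dop hK hne h.continuous)
    rw [hfix]
  · -- global minimality
    intro v hv
    have hGf_f : Gf μ ν K (fun q => f1 q + (-c)) = Gf μ ν K ⇑h := by
      rw [Gf_shift f1 hf1cont (-c), hf1def, Gf_DD ⇑h h.continuous]
    -- candidate from v
    have hDDv_cont : Continuous (Dop K (Dop K v)) := continuous_Dop hK hne (continuous_Dop hK hne hv)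
    set cv : ℝ := Dop K (Dop K v) q0 with hcv
    have hwlip : LipschitzWith R (fun q => Dop K (Dop K v) q + (-cv)) := by
      apply LipschitzWith.of_dist_le_mul
      intro p q
      have := (lipDop (continuous_Dop hK hne hv)).dist_le_mul p q
      calc dist (Dop K (Dop K v) p + (-cv)) (Dop K (Dop K v) q + (-cv))
          = dist (Dop K (Dop K v) p) (Dop K (Dop K v) q) := dist_add_right _ _ _
        _ ≤ R * dist p q := this
    set w : K →ᵇ ℝ := BoundedContinuousFunction.mkOfCompact
      ⟨fun q => Dop K (Dop K v) q + (-cv), by fun_prop⟩ with hwdef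
    have hwA : w ∈ A := by
      constructor
      · exact hwlip
      · show Dop K (Dop K v) q0 + (-cv) = 0
        rw [hcv]; ring
    have hGf_w : Gf μ ν K ⇑w = Gf μ ν K v := by
      have : ⇑w = fun q => Dop K (Dop K v) q + (-cv) := rfl
      rw [this, Gf_shift (Dop K (Dop K v)) hDDv_cont (-cv), Gf_DD v hv]
    calc Gf μ ν K (fun q => f1 q + (-c)) = Gf μ ν K ⇑h := hGf_f
      _ ≤ Gf μ ν K ⇑w := hhmin hwA
      _ = Gf μ ν K v := hGf_w

/-- Existence of the Brenier potential: a continuous `f` on `K`, equal to its double transform,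
whose transform's gradient pushes `μ` forward to `ν`. -/
theorem exists_potential [FiniteDimensional ℝ F] [SecondCountableTopology F]
    (hK : IsCompact K) (hne : K.Nonempty) {R : ℝ≥0} (hR : ∀ x ∈ K, ‖x‖ ≤ R)
    (vol μ ν : Measure F) [vol.IsAddHaarMeasure]
    [IsProbabilityMeasure μ] [IsProbabilityMeasure ν]
    (hμK : μ Kᶜ = 0) (hνK : ν Kᶜ = 0) (hμac : μ ≪ vol) :
    ∃ f : K → ℝ, Continuous f ∧ Dop K (Dop K f) = f ∧
      Measure.map (gradient (str K f)) μ = ν := by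
  haveI : CompactSpace K := isCompact_iff_compactSpace.mp hK
  haveI : Nonempty K := hne.to_subtype
  obtain ⟨f, hfcont, hfix, hmin⟩ := global_min hK hne hR μ ν hμK hνK
  refine ⟨f, hfcont, hfix, ?_⟩
  set φ : F → ℝ := str K f with hφdef
  set ψ : F → ℝ := str K (Dop K f) with hψdef
  have hφlip : LipschitzWith R φ := lipschitz_str hK hne hfcont hR
  have hφcont : Continuous φ := hφlip.continuous
  have hψcont : Continuous ψ := continuous_str hK hne (continuous_Dop hK hne hfcont)
  have hdiff_ae : ∀ᵐ x ∂μ, DifferentiableAt ℝ φ x :=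
    hμac.ae_le (hφlip.ae_differentiableAt (μ := vol))
  have hgradmeas : Measurable (gradient φ) := by
    show Measurable fun x => (InnerProductSpace.toDual ℝ F).symm (fderiv ℝ φ x)
    exact ((InnerProductSpace.toDual ℝ F).symm.continuous.measurable).comp
      (measurable_fderiv ℝ φ)
  have hζgradint : ∀ ζ : F →ᵇ ℝ, Integrable (fun x => ζ (gradient φ x)) μ := by
    intro ζ
    refine Integrable.mono' (integrable_const ‖ζ‖)
      (ζ.continuous.measurable.comp hgradmeas).aestronglyMeasurable ?_
    exact Filter.Eventually.of_forall fun x => ζ.norm_coe_le_norm _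
  -- Euler-Lagrange inequality
  have key_le : ∀ ζ : F →ᵇ ℝ, ∫ x, ζ (gradient φ x) ∂μ ≤ ∫ y, ζ y ∂ν := by
    intro ζ
    set gt : ℝ → K → ℝ := fun t q => f q + t * ζ (q : F) with hgt
    have hgtcont : ∀ t, Continuous (gt t) := fun t =>
      hfcont.add (continuous_const.mul (ζ.continuous.comp continuous_subtype_val))
    have hIζν : Integrable (⇑ζ) ν := integrable_of_continuous hK hνK ζ.continuous
    have hIψν : Integrable ψ ν := integrable_of_continuous hK hνK hψcont
    set I : ℝ → ℝ := fun t => (∫ x, str K (gt t) x ∂μ) + ((∫ y, ψ y ∂ν) + t * ∫ y, ζ y ∂ν)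
      with hIdef
    have hI0 : I 0 = Gf μ ν K f := by
      have : gt 0 = f := by funext q; simp [hgt]
      simp only [hIdef, this, zero_mul, add_zero]
      rfl
    have hIt : ∀ t, Gf μ ν K f ≤ I t := by
      intro t
      have h1 : Gf μ ν K f ≤ Gf μ ν K (gt t) := hmin (gt t) (hgtcont t)
      have h2 : ∫ y, str K (Dop K (gt t)) y ∂ν ≤ ∫ y, ψ y + t * ζ y ∂ν := by
        apply integral_mono_ae
          (integrable_of_continuous hK hνK (continuous_str hK hne (continuous_Dop hK hne (hgtcont t))))
          (hIψν.add (hIζν.const_mul t))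
        filter_upwards [ae_mem_of_compl_null hνK] with y hy
        have hDD := DD_le hK hne (hgtcont t) ⟨y, hy⟩
        have hψy : ψ y = f ⟨y, hy⟩ := congrFun hfix ⟨y, hy⟩
        show str K (Dop K (gt t)) y ≤ ψ y + t * ζ y
        calc str K (Dop K (gt t)) y = Dop K (Dop K (gt t)) ⟨y, hy⟩ := rfl
          _ ≤ gt t ⟨y, hy⟩ := hDD
          _ = f ⟨y, hy⟩ + t * ζ y := rfl
          _ = ψ y + t * ζ y := by rw [hψy]
      have h3 : ∫ y, ψ y + t * ζ y ∂ν = (∫ y, ψ y ∂ν) + t * ∫ y, ζ y ∂ν := by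
        rw [integral_add hIψν (hIζν.const_mul t), MeasureTheory.integral_const_mul]
      calc Gf μ ν K f ≤ Gf μ ν K (gt t) := h1
        _ ≤ I t := by
            unfold Gf
            rw [hIdef]
            simp only []
            have := h2.trans_eq h3
            linarith
    -- difference quotient of the first integral
    have hquot_int : ∀ t : ℝ, t ≠ 0 →
        (I t - I 0) / t = (∫ x, (str K (gt t) x - φ x) / t ∂μ) + ∫ y, ζ y ∂ν := by
      intro t ht
      have hint1 : Integrable (fun x => str K (gt t) x) μ :=
        integrable_of_continuous hK hμK (continuous_str hK hne (hgtcont t))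
      have hint0 : Integrable φ μ := integrable_of_continuous hK hμK hφcont
      have h0' : ∫ x, str K (gt 0) x ∂μ = ∫ x, φ x ∂μ := by
        have : gt 0 = f := by funext q; simp [hgt]
        rw [this]
      have : I t - I 0 = (∫ x, (str K (gt t) x - φ x) ∂μ) + t * ∫ y, ζ y ∂ν := by
        rw [hIdef]
        simp only []
        rw [integral_sub hint1 hint0, h0']
        ring
      rw [this, add_div, ← integral_div]
      congr 1
      field_simp
    -- Danskin + dominated convergence
    have hlim : Filter.Tendsto (fun t : ℝ => ∫ x, (str K (gt t) x - φ x) / t ∂μ)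
        (nhdsWithin 0 {t : ℝ | t ≠ 0}) (nhds (∫ x, -ζ (gradient φ x) ∂μ)) := by
      apply tendsto_integral_filter_of_dominated_convergence (bound := fun _ => ‖ζ‖)
      · exact Filter.Eventually.of_forall fun t =>
          (((continuous_str hK hne (hgtcont t)).sub hφcont).div_const t).aestronglyMeasurable
      · have hself : ∀ᶠ t : ℝ in nhdsWithin 0 {t : ℝ | t ≠ 0}, t ≠ 0 :=
          eventually_mem_nhdsWithin
        filter_upwards [hself] with t ht
        apply Filter.Eventually.of_forall
        intro x
        have hnum : |str K (gt t) x - str K f x| ≤ |t| * ‖ζ‖ := by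
          apply str_sub_str_le hK hne (hgtcont t) hfcont
          intro q
          have : gt t q - f q = t * ζ (q : F) := by simp [hgt]
          rw [this, abs_mul]
          gcongr
          exact ζ.norm_coe_le_norm _
        rw [Real.norm_eq_abs, abs_div]
        rw [div_le_iff₀ (abs_pos.mpr ht)]
        calc |str K (gt t) x - φ x| ≤ |t| * ‖ζ‖ := hnum
          _ = ‖ζ‖ * |t| := mul_comm _ _
      · exact integrable_const _
      · filter_upwards [hdiff_ae] with x hx
        exact danskin hK hne hfcont ζ hx
    -- conclude
    have hL : Filter.Tendsto (fun t : ℝ => (I t - I 0) / t)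
        (nhdsWithin 0 (Set.Ioi 0)) (nhds ((∫ x, -ζ (gradient φ x) ∂μ) + ∫ y, ζ y ∂ν)) := by
      have hmono : nhdsWithin (0:ℝ) (Set.Ioi 0) ≤ nhdsWithin 0 {t : ℝ | t ≠ 0} :=
        nhdsWithin_mono 0 (fun t ht => ne_of_gt ht)
      have h1 : Filter.Tendsto (fun t : ℝ => (∫ x, (str K (gt t) x - φ x) / t ∂μ) + ∫ y, ζ y ∂ν)
          (nhdsWithin 0 {t : ℝ | t ≠ 0})
          (nhds ((∫ x, -ζ (gradient φ x) ∂μ) + ∫ y, ζ y ∂ν)) :=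
        hlim.add tendsto_const_nhds
      refine Filter.Tendsto.congr' ?_ (h1.mono_left hmono)
      filter_upwards [eventually_mem_nhdsWithin] with t (ht : t ∈ Set.Ioi 0)
      exact (hquot_int t (ne_of_gt ht)).symm
    have hnonneg : 0 ≤ (∫ x, -ζ (gradient φ x) ∂μ) + ∫ y, ζ y ∂ν := by
      apply ge_of_tendsto hL
      filter_upwards [eventually_mem_nhdsWithin] with t (ht : t ∈ Set.Ioi 0)
      have := hIt t
      rw [hI0] at *
      apply div_nonneg _ (le_of_lt ht)
      linarith [hIt t, hI0 ▸ (hIt 0)]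
    rw [integral_neg] at hnonneg
    linarith
  have key : ∀ ζ : F →ᵇ ℝ, ∫ x, ζ (gradient φ x) ∂μ = ∫ y, ζ y ∂ν := by
    intro ζ
    have h1 := key_le ζ
    have h2 := key_le (-ζ)
    simp only [BoundedContinuousFunction.coe_neg, Pi.neg_apply, integral_neg] at h2
    linarith
  -- conclude equality of measures
  haveI : IsProbabilityMeasure (Measure.map (gradient φ) μ) :=
    Measure.isProbabilityMeasure_map hgradmeas.aemeasurable
  apply MeasureTheory.ext_of_forall_lintegral_eq_of_IsFiniteMeasure
  intro f0
  have hζcont : Continuous fun x => ((f0 x : ℝ)) := NNReal.continuous_coe.comp f0.continuous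
  set ζ : F →ᵇ ℝ := BoundedContinuousFunction.comp _ (LipschitzWith.subtype_val _) f0 with hζdef
  have hζeq : ∀ x, ζ x = (f0 x : ℝ) := fun x => rfl
  have hintmap : Integrable (fun x => ((f0 x : ℝ))) (Measure.map (gradient φ) μ) := by
    refine Integrable.mono' (integrable_const ‖ζ‖) ?_ ?_
    · exact hζcont.aestronglyMeasurable
    · apply Filter.Eventually.of_forall
      intro x
      have := ζ.norm_coe_le_norm x
      rwa [hζeq] at this
  have hintν : Integrable (fun x => ((f0 x : ℝ))) ν :=
    integrable_of_continuous hK hνK hζcont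
  rw [lintegral_coe_eq_integral _ hintmap, lintegral_coe_eq_integral _ hintν]
  congr 1
  have hmap : ∫ x, ((f0 x : ℝ)) ∂(Measure.map (gradient φ) μ)
      = ∫ x, ((f0 (gradient φ x) : ℝ)) ∂μ :=
    integral_map hgradmeas.aemeasurable hζcont.aestronglyMeasurable
  rw [hmap]
  have := key ζ
  simpa [hζeq] using this

end Measures
end BrenierAux

open BrenierAux
open scoped RealInnerProductSpace


/-- **Brenier's theorem.** Let `Ω` be a bounded open subset of `ℝⁿ` and `μ, ν`
probability measures supported in `Ω`, absolutely continuous w.r.t. Lebesgue measure with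
bounded densities.  Then there is a convex function `φ : ℝⁿ → ℝ`, differentiable on a Borel
set of full `μ`-measure, such that `(∇φ)_# μ = ν`, the map `∇φ` minimizes the Monge cost
`∫ ‖x - T x‖² dμ` among Borel maps `T` pushing `μ` to `ν`, and any minimizer agrees with
`∇φ` `μ`-almost everywhere. -/
theorem stmt1 {n : ℕ} (Ω : Set (EuclideanSpace ℝ (Fin n)))
    (hΩopen : IsOpen Ω) (hΩbdd : Bornology.IsBounded Ω)
    (μ ν : Measure (EuclideanSpace ℝ (Fin n)))
    [IsProbabilityMeasure μ] [IsProbabilityMeasure ν]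
    (hμΩ : μ Ωᶜ = 0) (hνΩ : ν Ωᶜ = 0)
    (hμac : μ ≪ volume) (hνac : ν ≪ volume)
    (hμbdd : ∃ C : ℝ, ∀ᵐ x ∂volume, μ.rnDeriv volume x ≤ ENNReal.ofReal C)
    (hνbdd : ∃ C : ℝ, ∀ᵐ x ∂volume, ν.rnDeriv volume x ≤ ENNReal.ofReal C) :
    ∃ φ : EuclideanSpace ℝ (Fin n) → ℝ,
      ConvexOn ℝ Set.univ φ ∧
      (∃ D : Set (EuclideanSpace ℝ (Fin n)), MeasurableSet D ∧ μ Dᶜ = 0 ∧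
        ∀ x ∈ D, DifferentiableAt ℝ φ x) ∧
      -- (i) the gradient map pushes μ forward to ν
      Measure.map (fun x => gradient φ x) μ = ν ∧
      -- (ii) the gradient map minimizes the Monge quadratic cost
      (∀ T : EuclideanSpace ℝ (Fin n) → EuclideanSpace ℝ (Fin n),
        Measurable T → Measure.map T μ = ν →
        ∫ x, ‖x - gradient φ x‖ ^ 2 ∂μ ≤ ∫ x, ‖x - T x‖ ^ 2 ∂μ) ∧
      -- (iii) uniqueness of the optimal map
      (∀ T : EuclideanSpace ℝ (Fin n) → EuclideanSpace ℝ (Fin n),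
        Measurable T → Measure.map T μ = ν →
        ∫ x, ‖x - T x‖ ^ 2 ∂μ = ∫ x, ‖x - gradient φ x‖ ^ 2 ∂μ →
        ∀ᵐ x ∂μ, T x = gradient φ x) := by
  classical
  -- the compact set K
  set K : Set (EuclideanSpace ℝ (Fin n)) := closure Ω with hKdef
  have hK : IsCompact K := hΩbdd.isCompact_closure
  have hΩne : Ω.Nonempty := by
    by_contra hemp
    rw [Set.not_nonempty_iff_eq_empty] at hemp
    rw [hemp, Set.compl_empty] at hμΩ
    simp [measure_univ] at hμΩ
  have hne : K.Nonempty := hΩne.closure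
  have hμK : μ Kᶜ = 0 :=
    measure_mono_null (Set.compl_subset_compl.mpr subset_closure) hμΩ
  have hνK : ν Kᶜ = 0 :=
    measure_mono_null (Set.compl_subset_compl.mpr subset_closure) hνΩ
  -- radius bound
  obtain ⟨R0, hR0⟩ := hK.isBounded.subset_closedBall 0
  have hR : ∀ x ∈ K, ‖x‖ ≤ (R0.toNNReal : ℝ) := by
    intro x hx
    have := hR0 hx
    rw [Metric.mem_closedBall, dist_zero_right] at this
    exact this.trans (Real.le_coe_toNNReal R0)
  set R : NNReal := R0.toNNReal with hRdef
  have hRnn : (0:ℝ) ≤ (R : ℝ) := R.2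
  -- the potential
  obtain ⟨f, hfcont, hfix, hmap⟩ :=
    exists_potential hK hne hR volume μ ν hμK hνK hμac
  set φ : EuclideanSpace ℝ (Fin n) → ℝ := str K f with hφdef
  set ψ : EuclideanSpace ℝ (Fin n) → ℝ := str K (Dop K f) with hψdef
  have hφlip : LipschitzWith R φ := lipschitz_str hK hne hfcont hR
  have hφcont : Continuous φ := hφlip.continuous
  have hψcont : Continuous ψ := continuous_str hK hne (continuous_Dop hK hne hfcont)
  have hψq : ∀ q : K, ψ (q : EuclideanSpace ℝ (Fin n)) = f q := fun q => congrFun hfix q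
  -- global Young inequality
  have Yglob : ∀ (z : EuclideanSpace ℝ (Fin n)) (q : K), ⟪(q : EuclideanSpace ℝ (Fin n)), z⟫ - ψ (q : EuclideanSpace ℝ (Fin n)) ≤ φ z := by
    intro z q
    rw [hψq q]
    exact le_str hK hne hfcont q z
  -- differentiability a.e.
  have hdiff_ae : ∀ᵐ x ∂μ, DifferentiableAt ℝ φ x :=
    hμac.ae_le (hφlip.ae_differentiableAt (μ := volume))
  -- gradient is measurable
  have hgradmeas : Measurable (gradient φ) := by
    show Measurable fun x => (InnerProductSpace.toDual ℝ (EuclideanSpace ℝ (Fin n))).symm (fderiv ℝ φ x)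
    exact ((InnerProductSpace.toDual ℝ (EuclideanSpace ℝ (Fin n))).symm.continuous.measurable).comp
      (measurable_fderiv ℝ φ)
  -- at differentiability points, the gradient is the maximizer
  have Ytouch : ∀ x : EuclideanSpace ℝ (Fin n), DifferentiableAt ℝ φ x →
      gradient φ x ∈ K ∧ φ x + ψ (gradient φ x) = ⟪gradient φ x, x⟫ := by
    intro x hx
    obtain ⟨q, hq⟩ := exists_str_eq hK hne hfcont x
    have hgq : gradient φ x = (q : EuclideanSpace ℝ (Fin n)) := maximizer_eq_gradient hK hne hfcont hx hq
    rw [hgq]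
    refine ⟨q.2, ?_⟩
    rw [hψq q]
    linarith [hq]
  have hgradK : ∀ᵐ x ∂μ, gradient φ x ∈ K := by
    filter_upwards [hdiff_ae] with x hx
    exact (Ytouch x hx).1
  -- basic integrability
  have hx2int : Integrable (fun x : EuclideanSpace ℝ (Fin n) => ‖x‖ ^ 2) μ :=
    integrable_of_continuous hK hμK (continuous_norm.pow 2)
  have hy2int : Integrable (fun y : EuclideanSpace ℝ (Fin n) => ‖y‖ ^ 2) ν :=
    integrable_of_continuous hK hνK (continuous_norm.pow 2)
  have hφint : Integrable φ μ := integrable_of_continuous hK hμK hφcont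
  have hψνint : Integrable ψ ν := integrable_of_continuous hK hνK hψcont
  obtain ⟨Cψ, hCψ⟩ := hK.exists_bound_of_continuousOn hψcont.continuousOn
  -- cost identity for measurable maps landing a.e. in K
  have costT : ∀ T : EuclideanSpace ℝ (Fin n) → EuclideanSpace ℝ (Fin n),
      Measurable T → (∀ᵐ x ∂μ, T x ∈ K) →
      Measure.map T μ = ν →
      Integrable (fun x => ⟪x, T x⟫) μ ∧
      ∫ x, ‖x - T x‖ ^ 2 ∂μ
        = ∫ x, ‖x‖ ^ 2 ∂μ + ∫ y, ‖y‖ ^ 2 ∂ν - 2 * ∫ x, ⟪x, T x⟫ ∂μ := by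
    intro T hT hTK hTmap
    have hinner_meas : Measurable fun x => ⟪x, T x⟫ := measurable_id.inner hT
    have hinner_int : Integrable (fun x => ⟪x, T x⟫) μ := by
      refine Integrable.mono' (integrable_const ((R : ℝ) * R)) hinner_meas.aestronglyMeasurable ?_
      filter_upwards [ae_mem_of_compl_null hμK, hTK] with x hx hTx
      rw [Real.norm_eq_abs]
      calc |⟪x, T x⟫| ≤ ‖x‖ * ‖T x‖ := abs_real_inner_le_norm _ _
        _ ≤ (R : ℝ) * R := mul_le_mul (hR x hx) (hR _ hTx) (norm_nonneg _) hRnn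
    have hT2_int : Integrable (fun x => ‖T x‖ ^ 2) μ := by
      refine Integrable.mono' (integrable_const ((R : ℝ) ^ 2))
        ((hT.norm.pow_const 2).aestronglyMeasurable) ?_
      filter_upwards [hTK] with x hTx
      rw [Real.norm_eq_abs, abs_of_nonneg (by positivity)]
      exact pow_le_pow_left₀ (norm_nonneg _) (hR _ hTx) 2
    have hT2map : ∫ x, ‖T x‖ ^ 2 ∂μ = ∫ y, ‖y‖ ^ 2 ∂ν := by
      rw [← hTmap, integral_map hT.aemeasurable]
      exact (continuous_norm.pow 2).aestronglyMeasurable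
    refine ⟨hinner_int, ?_⟩
    have hpt : ∀ x : EuclideanSpace ℝ (Fin n), ‖x - T x‖ ^ 2 = ‖x‖ ^ 2 - 2 * ⟪x, T x⟫ + ‖T x‖ ^ 2 := fun x =>
      norm_sub_sq_real x (T x)
    have hsubint : Integrable (fun x => ‖x‖ ^ 2 - 2 * ⟪x, T x⟫) μ :=
      hx2int.sub (hinner_int.const_mul 2)
    calc ∫ x, ‖x - T x‖ ^ 2 ∂μ
        = ∫ x, (‖x‖ ^ 2 - 2 * ⟪x, T x⟫ + ‖T x‖ ^ 2) ∂μ := by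
          exact integral_congr_ae (Filter.Eventually.of_forall hpt)
      _ = (∫ x, (‖x‖ ^ 2 - 2 * ⟪x, T x⟫) ∂μ) + ∫ x, ‖T x‖ ^ 2 ∂μ :=
          integral_add hsubint hT2_int
      _ = ((∫ x, ‖x‖ ^ 2 ∂μ) - ∫ x, 2 * ⟪x, T x⟫ ∂μ) + ∫ x, ‖T x‖ ^ 2 ∂μ := by
          rw [integral_sub hx2int (hinner_int.const_mul 2)]
      _ = ∫ x, ‖x‖ ^ 2 ∂μ + ∫ y, ‖y‖ ^ 2 ∂ν - 2 * ∫ x, ⟪x, T x⟫ ∂μ := by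
          rw [MeasureTheory.integral_const_mul, hT2map]; ring
  -- maps pushing μ to ν land a.e. in K
  have hTK_of_map : ∀ T : EuclideanSpace ℝ (Fin n) → EuclideanSpace ℝ (Fin n),
      Measurable T → Measure.map T μ = ν → ∀ᵐ x ∂μ, T x ∈ K := by
    intro T hT hTmap
    have h1 : μ (T ⁻¹' Ωᶜ) = 0 := by
      rw [← Measure.map_apply hT hΩopen.measurableSet.compl, hTmap]
      exact hνΩ
    rw [MeasureTheory.ae_iff]
    apply measure_mono_null _ h1
    intro x hx
    simp only [Set.mem_setOf_eq] at hx
    simp only [Set.mem_preimage, Set.mem_compl_iff]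
    exact fun hmem => hx (subset_closure hmem)
  -- change of variables for ψ
  have hψdata : ∀ T : EuclideanSpace ℝ (Fin n) → EuclideanSpace ℝ (Fin n),
      Measurable T → (∀ᵐ x ∂μ, T x ∈ K) → Measure.map T μ = ν →
      Integrable (fun x => ψ (T x)) μ ∧ ∫ x, ψ (T x) ∂μ = ∫ y, ψ y ∂ν := by
    intro T hT hTK hTmap
    constructor
    · refine Integrable.mono' (integrable_const Cψ)
        (hψcont.measurable.comp hT).aestronglyMeasurable ?_
      filter_upwards [hTK] with x hx
      exact hCψ _ hx
    · rw [← hTmap, integral_map hT.aemeasurable hψcont.aestronglyMeasurable]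
  -- key inequality: the inner product integral is at most Jm
  have hinner_le : ∀ T : EuclideanSpace ℝ (Fin n) → EuclideanSpace ℝ (Fin n),
      Measurable T → (∀ᵐ x ∂μ, T x ∈ K) → Measure.map T μ = ν →
      ∫ x, ⟪x, T x⟫ ∂μ ≤ ∫ x, φ x ∂μ + ∫ y, ψ y ∂ν := by
    intro T hT hTK hTmap
    obtain ⟨hψT_int, hψT_map⟩ := hψdata T hT hTK hTmap
    have hpt : ∀ᵐ x ∂μ, ⟪x, T x⟫ ≤ φ x + ψ (T x) := by
      filter_upwards [hTK] with x hx
      have := Yglob x ⟨T x, hx⟩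
      have hcomm : ⟪x, T x⟫ = ⟪T x, x⟫ := real_inner_comm _ _
      rw [hcomm]
      linarith [this]
    calc ∫ x, ⟪x, T x⟫ ∂μ ≤ ∫ x, (φ x + ψ (T x)) ∂μ :=
          integral_mono_ae (costT T hT hTK hTmap).1 (hφint.add hψT_int) hpt
      _ = ∫ x, φ x ∂μ + ∫ y, ψ y ∂ν := by
          rw [integral_add hφint hψT_int, hψT_map]
  -- equality for the gradient map
  have hinner_grad : ∫ x, ⟪x, gradient φ x⟫ ∂μ = ∫ x, φ x ∂μ + ∫ y, ψ y ∂ν := by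
    obtain ⟨hψG_int, hψG_map⟩ := hψdata (gradient φ) hgradmeas hgradK hmap
    have hpt : ∀ᵐ x ∂μ, ⟪x, gradient φ x⟫ = φ x + ψ (gradient φ x) := by
      filter_upwards [hdiff_ae] with x hx
      have := (Ytouch x hx).2
      have hcomm : ⟪x, gradient φ x⟫ = ⟪gradient φ x, x⟫ := real_inner_comm _ _
      rw [hcomm]
      linarith [this]
    calc ∫ x, ⟪x, gradient φ x⟫ ∂μ = ∫ x, (φ x + ψ (gradient φ x)) ∂μ :=
          integral_congr_ae hpt
      _ = ∫ x, φ x ∂μ + ∫ y, ψ y ∂ν := by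
          rw [integral_add hφint hψG_int, hψG_map]
  -- assemble the answer
  refine ⟨φ, convexOn_str hK hne hfcont,
    ⟨{x | DifferentiableAt ℝ φ x}, measurableSet_of_differentiableAt ℝ φ, ?_,
      fun x hx => hx⟩, hmap, ?_, ?_⟩
  · rw [MeasureTheory.ae_iff] at hdiff_ae
    rw [Set.compl_setOf]
    exact hdiff_ae
  · -- (ii) optimality
    intro T hT hTmap
    have hTK := hTK_of_map T hT hTmap
    obtain ⟨hTint, hTcost⟩ := costT T hT hTK hTmap
    obtain ⟨hGint, hGcost⟩ := costT (gradient φ) hgradmeas hgradK hmap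
    rw [hTcost, hGcost]
    have h1 := hinner_le T hT hTK hTmap
    linarith [hinner_grad]
  · -- (iii) uniqueness
    intro T hT hTmap hcost
    have hTK := hTK_of_map T hT hTmap
    obtain ⟨hTint, hTcost⟩ := costT T hT hTK hTmap
    obtain ⟨hGint, hGcost⟩ := costT (gradient φ) hgradmeas hgradK hmap
    have hinnT : ∫ x, ⟪x, T x⟫ ∂μ = ∫ x, φ x ∂μ + ∫ y, ψ y ∂ν := by
      rw [hTcost, hGcost] at hcost
      linarith [hinner_grad]
    obtain ⟨hψT_int, hψT_map⟩ := hψdata T hT hTK hTmap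
    have hgapint : Integrable (fun x => φ x + ψ (T x) - ⟪x, T x⟫) μ :=
      (hφint.add hψT_int).sub hTint
    have hgapnon : 0 ≤ᵐ[μ] fun x => φ x + ψ (T x) - ⟪x, T x⟫ := by
      filter_upwards [hTK] with x hx
      have := Yglob x ⟨T x, hx⟩
      have hcomm : ⟪x, T x⟫ = ⟪T x, x⟫ := real_inner_comm _ _
      simp only [Pi.zero_apply]
      rw [hcomm]
      linarith [this]
    have hgapzero : ∫ x, (φ x + ψ (T x) - ⟪x, T x⟫) ∂μ = 0 := by
      have e1 : ∫ x, (φ x + ψ (T x) - ⟪x, T x⟫) ∂μ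
          = (∫ x, (φ x + ψ (T x)) ∂μ) - ∫ x, ⟪x, T x⟫ ∂μ :=
        integral_sub (hφint.add hψT_int) hTint
      have e2 : ∫ x, (φ x + ψ (T x)) ∂μ = (∫ x, φ x ∂μ) + ∫ x, ψ (T x) ∂μ :=
        integral_add hφint hψT_int
      rw [e1, e2, hψT_map, hinnT]
      ring
    have haezero : (fun x => φ x + ψ (T x) - ⟪x, T x⟫) =ᵐ[μ] 0 :=
      (integral_eq_zero_iff_of_nonneg_ae hgapnon hgapint).mp hgapzero
    filter_upwards [haezero, hdiff_ae, hTK] with x h0 hdx hKx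
    have h0' : φ x + ψ (T x) - ⟪x, T x⟫ = 0 := h0
    have hglob : ∀ z, ⟪T x, z⟫ - ψ (T x) ≤ φ z := fun z => Yglob z ⟨T x, hKx⟩
    have heq : φ x = ⟪T x, x⟫ - ψ (T x) := by
      have hcomm : ⟪x, T x⟫ = ⟪T x, x⟫ := real_inner_comm _ _
      rw [← hcomm]
      linarith
    exact (eq_gradient_of_touch hglob heq hdx).symm
end
end

section
/- Let Ω be a bounded open subset of ℝ³ and let T : ℝ³ → ℝ³ be a C² map restricting to a bijection of Ω onto itself with det DT(x) > 0 for all x ∈ Ω. Let u = (u¹, u², u³) : ℝ³ → ℝ³ be a C¹ vector field whose helicity density Θ = u¹(∂₂u³ − ∂₃u²) + u²(∂₃u¹ − ∂₁u³) + u³(∂₁u² − ∂₂u¹) is integrable on Ω. Define û_j(x) = Σ_{p=1}^{3} u^p(T(x))·∂_jT^p(x) for j = 1,2,3 and let Θ̂ be the helicity density of (û₁, û₂, û₃). Then ∫_Ω Θ̂(x) dx = ∫_Ω Θ(x) dx. -/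
open MeasureTheory

/-- Partial derivative `∂_p f (x)` of a real-valued function on `ℝ³`. -/
noncomputable def pd3 (p : Fin 3) (f : (Fin 3 → ℝ) → ℝ) (x : Fin 3 → ℝ) : ℝ :=
  fderiv ℝ f x (Pi.single p 1)

/-- Helicity density of a vector field with components `w 0, w 1, w 2` on `ℝ³`:
`Θ = w¹(∂₂w³ − ∂₃w²) + w²(∂₃w¹ − ∂₁w³) + w³(∂₁w² − ∂₂w¹)`. -/
noncomputable def helicity3 (w : Fin 3 → (Fin 3 → ℝ) → ℝ) (x : Fin 3 → ℝ) : ℝ :=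
  w 0 x * (pd3 1 (w 2) x - pd3 2 (w 1) x)
    + w 1 x * (pd3 2 (w 0) x - pd3 0 (w 2) x)
    + w 2 x * (pd3 0 (w 1) x - pd3 1 (w 0) x)

private lemma clm_eval (B : (Fin 3 → ℝ) →L[ℝ] (Fin 3 → ℝ)) (v : Fin 3 → ℝ) (p : Fin 3) :
    B v p = ∑ r : Fin 3, v r * B (Pi.single r 1) p := by
  have hv : v = ∑ r : Fin 3, v r • (Pi.single r 1 : Fin 3 → ℝ) := by
    ext i; simp [Pi.single_apply]
  conv_lhs => rw [hv]
  rw [map_sum]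
  simp [mul_comm]

private lemma fderiv_proj (T : (Fin 3 → ℝ) → (Fin 3 → ℝ)) (hT : Differentiable ℝ T) (p : Fin 3)
    (y v : Fin 3 → ℝ) : fderiv ℝ (fun z => T z p) y v = fderiv ℝ T y v p := by
  have : HasFDerivAt (fun z => T z p)
      ((ContinuousLinearMap.proj p : (Fin 3 → ℝ) →L[ℝ] ℝ).comp (fderiv ℝ T y)) y :=
    ((ContinuousLinearMap.proj p : (Fin 3 → ℝ) →L[ℝ] ℝ).hasFDerivAt).comp y (hT y).hasFDerivAt
  rw [this.fderiv]; rfl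

private lemma key (T : (Fin 3 → ℝ) → (Fin 3 → ℝ)) (hT : ContDiff ℝ 2 T)
    (u : (Fin 3 → ℝ) → (Fin 3 → ℝ)) (hu : ContDiff ℝ 1 u)
    (uhat : Fin 3 → (Fin 3 → ℝ) → ℝ)
    (huhat : ∀ (j : Fin 3) (x : Fin 3 → ℝ),
      uhat j x = ∑ p : Fin 3, u (T x) p * pd3 j (fun y => T y p) x)
    (x : Fin 3 → ℝ) :
    helicity3 uhat x = (fderiv ℝ T x).det * helicity3 (fun p y => u y p) (T x) := by
  have hTd : Differentiable ℝ T := hT.differentiable (by norm_num)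
  have hud : Differentiable ℝ u := hu.differentiable (by norm_num)
  set e : Fin 3 → (Fin 3 → ℝ) := fun i => Pi.single i 1 with he
  set A := fderiv ℝ T x with hA
  set B := fderiv ℝ u (T x) with hB
  have hT' : ContDiff ℝ 1 (fderiv ℝ T) := hT.fderiv_right (by norm_num)
  set D := fderiv ℝ (fderiv ℝ T) x with hD
  have hDD : HasFDerivAt (fderiv ℝ T) D x := (hT'.differentiable (by norm_num) x).hasFDerivAt
  have hsymm : ∀ j k : Fin 3, D (e j) (e k) = D (e k) (e j) := fun j k =>
    second_derivative_symmetric (fun y => (hTd y).hasFDerivAt) hDD (e j) (e k)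
  have huh : ∀ k : Fin 3, uhat k = fun y => ∑ p : Fin 3, u (T y) p * fderiv ℝ T y (e k) p := by
    intro k; funext y; rw [huhat]
    exact Finset.sum_congr rfl fun p _ => by rw [pd3, fderiv_proj T hTd]
  have main : ∀ j k : Fin 3, pd3 j (uhat k) x =
      ∑ p : Fin 3, (u (T x) p * D (e j) (e k) p + A (e k) p * B (A (e j)) p) := by
    intro j k
    have hg : ∀ p : Fin 3, HasFDerivAt (fun y => u (T y) p)
        (((ContinuousLinearMap.proj p : (Fin 3 → ℝ) →L[ℝ] ℝ).comp B).comp A) x := by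
      intro p
      have h1 : HasFDerivAt (fun y => u (T y)) (B.comp A) x :=
        (hud (T x)).hasFDerivAt.comp x (hTd x).hasFDerivAt
      exact ((ContinuousLinearMap.proj p : (Fin 3 → ℝ) →L[ℝ] ℝ).hasFDerivAt).comp x h1
    have hh : ∀ p : Fin 3, HasFDerivAt (fun y => fderiv ℝ T y (e k) p)
        (((ContinuousLinearMap.proj p : (Fin 3 → ℝ) →L[ℝ] ℝ).comp
          (ContinuousLinearMap.apply ℝ (Fin 3 → ℝ) (e k))).comp D) x := by
      intro p
      exact (((ContinuousLinearMap.proj p : (Fin 3 → ℝ) →L[ℝ] ℝ).comp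
        (ContinuousLinearMap.apply ℝ (Fin 3 → ℝ) (e k))).hasFDerivAt).comp x hDD
    have hfull : HasFDerivAt (uhat k)
        (∑ p : Fin 3, (u (T x) p •
            (((ContinuousLinearMap.proj p : (Fin 3 → ℝ) →L[ℝ] ℝ).comp
              (ContinuousLinearMap.apply ℝ (Fin 3 → ℝ) (e k))).comp D)
          + fderiv ℝ T x (e k) p •
            (((ContinuousLinearMap.proj p : (Fin 3 → ℝ) →L[ℝ] ℝ).comp B).comp A))) x := by
      rw [huh k]
      exact HasFDerivAt.fun_sum fun p _ => (hg p).mul (hh p)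
    rw [pd3, hfull.fderiv]
    simp [ContinuousLinearMap.sum_apply, ContinuousLinearMap.add_apply,
      ContinuousLinearMap.smul_apply, ContinuousLinearMap.comp_apply,
      ContinuousLinearMap.proj_apply, ContinuousLinearMap.apply_apply]
    rfl
  have hval : ∀ i : Fin 3, uhat i x = ∑ p : Fin 3, u (T x) p * A (e i) p := by
    intro i; rw [huh i]
  have hc : ∀ (r p : Fin 3), pd3 r (fun y => u y p) (T x) = B (e r) p := by
    intro r p; rw [pd3, fderiv_proj u hud]
  have hBA : ∀ (j p : Fin 3), B (A (e j)) p = ∑ r : Fin 3, A (e j) r * B (e r) p :=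
    fun j p => clm_eval B (A (e j)) p
  have hdet : A.det = Matrix.det (Matrix.of fun i j => A (e j) i) := by
    rw [ContinuousLinearMap.det, ← LinearMap.det_toMatrix (Pi.basisFun ℝ (Fin 3))]
    congr 1
  rw [helicity3, helicity3]
  rw [main 1 2, main 2 1, main 2 0, main 0 2, main 0 1, main 1 0,
    hval 0, hval 1, hval 2, hdet, Matrix.det_fin_three]
  simp only [hBA, hc, Matrix.of_apply,
    show D (e 2) (e 1) = D (e 1) (e 2) from (hsymm 1 2).symm,
    show D (e 2) (e 0) = D (e 0) (e 2) from (hsymm 0 2).symm,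
    show D (e 1) (e 0) = D (e 0) (e 1) from (hsymm 0 1).symm,
    Fin.sum_univ_three]
  ring

/-- Let `Ω ⊆ ℝ³` be bounded open and `T : ℝ³ → ℝ³` a `C²` map restricting
to a bijection of `Ω` onto itself with positive Jacobian determinant on `Ω`.  Let `u` be a
`C¹` vector field whose helicity density `Θ` is integrable on `Ω`.  With `û_j` the
components of the pull-back of the 1-form `Σ_p u^p dx^p` and `Θ̂` the helicity density of
`(û₁,û₂,û₃)`, we have `∫_Ω Θ̂ = ∫_Ω Θ`: total helicity is conserved. -/
theorem stmt8 (Ω : Set (Fin 3 → ℝ)) (hΩopen : IsOpen Ω)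
    (hΩbdd : Bornology.IsBounded Ω)
    (T : (Fin 3 → ℝ) → (Fin 3 → ℝ)) (hT : ContDiff ℝ 2 T)
    (hTbij : Set.BijOn T Ω Ω)
    (hdet : ∀ x ∈ Ω, 0 < (fderiv ℝ T x).det)
    (u : (Fin 3 → ℝ) → (Fin 3 → ℝ)) (hu : ContDiff ℝ 1 u)
    (hΘi : IntegrableOn (helicity3 (fun p y => u y p)) Ω)
    (uhat : Fin 3 → (Fin 3 → ℝ) → ℝ)
    (huhat : ∀ (j : Fin 3) (x : Fin 3 → ℝ),
      uhat j x = ∑ p : Fin 3, u (T x) p * pd3 j (fun y => T y p) x) :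
    ∫ x in Ω, helicity3 uhat x = ∫ x in Ω, helicity3 (fun p y => u y p) x := by
  have hTd : Differentiable ℝ T := hT.differentiable (by norm_num)
  have h1 : ∫ x in Ω, helicity3 uhat x
      = ∫ x in Ω, |(fderiv ℝ T x).det| • helicity3 (fun p y => u y p) (T x) := by
    refine setIntegral_congr_fun hΩopen.measurableSet fun x hx => ?_
    rw [key T hT u hu uhat huhat x, abs_of_pos (hdet x hx), smul_eq_mul]
  rw [h1, ← integral_image_eq_integral_abs_det_fderiv_smul volume hΩopen.measurableSet
      (fun x _ => (hTd x).hasFDerivAt.hasFDerivWithinAt) hTbij.injOn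
      (helicity3 (fun p y => u y p)), hTbij.image_eq]
end

section
/- Let f : ℝⁿ → ℝ be C¹ and let e : ℝⁿ → ℝⁿ be a C¹ vector field. Suppose δ > 0 and S : (−δ, δ) × ℝⁿ → ℝⁿ is a C¹ map such that S(0, x) = x and S(ε, x + ε·e(x)) = x for all |ε| < δ and x ∈ ℝⁿ (i.e. S(ε, ·) is a left inverse of the map x ↦ x + ε·e(x)). Define H(ε, x) = f(S(ε, x))·det(Iₙ + ε·De(S(ε, x))). Then for every x ∈ ℝⁿ, the function ε ↦ H(ε, x) is differentiable at ε = 0 with derivative ∂H/∂ε(0, x) = f(x)·div e(x) − e(x)·∇f(x). -/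
open MeasureTheory

/-- Partial derivative `∂_p f (x)` of a real-valued function on `ℝⁿ`. -/
noncomputable def pd (n : ℕ) (p : Fin n) (f : (Fin n → ℝ) → ℝ) (x : Fin n → ℝ) : ℝ :=
  fderiv ℝ f x (Pi.single p 1)

/-- Let `f : ℝⁿ → ℝ` be `C¹` and `e : ℝⁿ → ℝⁿ` a `C¹` vector field.
Suppose `δ > 0` and `S : (−δ,δ) × ℝⁿ → ℝⁿ` is `C¹` with `S (0,x) = x` and
`S (ε, x + ε•e x) = x` (a left inverse of `x ↦ x + ε·e x`).  For
`H (ε, x) = f (S (ε,x)) · det (Iₙ + ε•De (S (ε,x)))` (the coefficient of the push-forward of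
the `n`-vector field `f ∂₁∧…∧∂ₙ`), the map `ε ↦ H (ε, x)` is differentiable at `ε = 0` with
derivative `f·div e − e·∇f` at `x`. -/
theorem stmt13 {n : ℕ} (f : (Fin n → ℝ) → ℝ) (hf : ContDiff ℝ 1 f)
    (e : (Fin n → ℝ) → (Fin n → ℝ)) (he : ContDiff ℝ 1 e)
    (δ : ℝ) (hδ : 0 < δ)
    (S : ℝ × (Fin n → ℝ) → (Fin n → ℝ))
    (hS : ContDiffOn ℝ 1 S (Set.Ioo (-δ) δ ×ˢ Set.univ))
    (hS0 : ∀ x : Fin n → ℝ, S (0, x) = x)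
    (hSinv : ∀ (ε : ℝ) (x : Fin n → ℝ), |ε| < δ → S (ε, x + ε • e x) = x)
    (H : ℝ → (Fin n → ℝ) → ℝ)
    (hH : ∀ (ε : ℝ) (x : Fin n → ℝ),
      H ε x = f (S (ε, x)) *
        (ContinuousLinearMap.id ℝ (Fin n → ℝ) + ε • fderiv ℝ e (S (ε, x))).det) :
    ∀ x : Fin n → ℝ,
      HasDerivAt (fun ε => H ε x)
        (f x * (∑ p : Fin n, pd n p (fun y => e y p) x)
          - ∑ p : Fin n, e x p * pd n p f x) 0 := by
  intro x
  -- differentiability of S at (0, x)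
  have hmem0 : ((0:ℝ), x) ∈ Set.Ioo (-δ) δ ×ˢ (Set.univ : Set (Fin n → ℝ)) :=
    ⟨⟨neg_lt_zero.mpr hδ, hδ⟩, trivial⟩
  have hop : IsOpen (Set.Ioo (-δ) δ ×ˢ (Set.univ : Set (Fin n → ℝ))) :=
    isOpen_Ioo.prod isOpen_univ
  have hdS : DifferentiableAt ℝ S (0, x) :=
    (hS.differentiableOn one_ne_zero).differentiableAt (hop.mem_nhds hmem0)
  set L := fderiv ℝ S (0, x) with hL_def
  have hLS : HasFDerivAt S L (0, x) := hdS.hasFDerivAt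
  set g : ℝ → (Fin n → ℝ) := fun ε => S (ε, x) with hg_def
  -- derivative of g along the first curve
  have hc1 : HasDerivAt (fun ε : ℝ => ((ε, x) : ℝ × (Fin n → ℝ))) (1, 0) 0 :=
    (hasDerivAt_id 0).prodMk (hasDerivAt_const 0 x)
  have hgL : HasDerivAt g (L (1, 0)) 0 := hLS.comp_hasDerivAt 0 hc1
  -- second curve
  have hxc : HasDerivAt (fun ε : ℝ => x + ε • e x) ((1:ℝ) • e x) 0 :=
    HasDerivAt.const_add x ((hasDerivAt_id 0).smul_const (e x))
  have hc2 : HasDerivAt (fun ε : ℝ => ((ε, x + ε • e x) : ℝ × (Fin n → ℝ)))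
      (1, (1:ℝ) • e x) 0 := (hasDerivAt_id 0).prodMk hxc
  have hLS' : HasFDerivAt S L (0, x + (0:ℝ) • e x) := by
    convert hLS using 2 <;> simp
  have hSc2 : HasDerivAt (fun ε : ℝ => S (ε, x + ε • e x)) (L (1, (1:ℝ) • e x)) 0 :=
    hLS'.comp_hasDerivAt 0 hc2
  have heq : (fun ε : ℝ => S (ε, x + ε • e x)) =ᶠ[nhds 0] fun _ => x := by
    have hev : ∀ᶠ ε : ℝ in nhds 0, |ε| < δ := by
      have := Metric.ball_mem_nhds (0:ℝ) hδ
      filter_upwards [this] with ε hε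
      simpa [Real.dist_eq] using hε
    filter_upwards [hev] with ε hε
    exact hSinv ε x hε
  have hSc2' : HasDerivAt (fun ε : ℝ => S (ε, x + ε • e x)) 0 0 :=
    (hasDerivAt_const 0 x).congr_of_eventuallyEq heq
  have key1 : L (1, (1:ℝ) • e x) = 0 := hSc2.unique hSc2'
  -- third curve
  have hc3 : HasDerivAt (fun t : ℝ => (((0:ℝ), x + t • e x) : ℝ × (Fin n → ℝ)))
      (0, (1:ℝ) • e x) 0 := (hasDerivAt_const 0 (0:ℝ)).prodMk hxc
  have hLS'' : HasFDerivAt S L ((0:ℝ), x + (0:ℝ) • e x) := hLS'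
  have hSc3 : HasDerivAt (fun t : ℝ => S (0, x + t • e x)) (L (0, (1:ℝ) • e x)) 0 :=
    hLS''.comp_hasDerivAt 0 hc3
  have hSc3' : HasDerivAt (fun t : ℝ => S (0, x + t • e x)) ((1:ℝ) • e x) 0 := by
    have : (fun t : ℝ => S (0, x + t • e x)) = fun t : ℝ => x + t • e x :=
      funext fun t => hS0 _
    rw [this]; exact hxc
  have key2 : L (0, (1:ℝ) • e x) = (1:ℝ) • e x := hSc3.unique hSc3'
  have hL10 : L (1, 0) = -(e x) := by
    have h10 : ((1:ℝ), (0 : Fin n → ℝ)) = (1, (1:ℝ) • e x) - (0, (1:ℝ) • e x) := by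
      simp
    rw [h10, map_sub, key1, key2]; simp
  have hgderiv : HasDerivAt g (-(e x)) 0 := hL10 ▸ hgL
  have hg0 : g 0 = x := hS0 x
  -- derivative of f ∘ g
  have hfx : HasFDerivAt f (fderiv ℝ f x) (g 0) := by
    rw [hg0]; exact (hf.differentiable one_ne_zero x).hasFDerivAt
  have hfg : HasDerivAt (fun ε => f (g ε)) (fderiv ℝ f x (-(e x))) 0 :=
    hfx.comp_hasDerivAt 0 hgderiv
  -- the determinant part
  set A : ℝ → Fin n → Fin n → ℝ :=
    fun ε i j => fderiv ℝ e (g ε) (Pi.single j 1) i with hA_def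
  set F : ℝ × (Fin n → Fin n → ℝ) → ℝ :=
    fun q => Matrix.det (Matrix.of fun i j =>
      (if i = j then (1:ℝ) else 0) + q.1 * q.2 i j) with hF_def
  have key : ∀ ε : ℝ,
      (ContinuousLinearMap.id ℝ (Fin n → ℝ) + ε • fderiv ℝ e (g ε)).det = F (ε, A ε) := by
    intro ε
    rw [ContinuousLinearMap.det, ← LinearMap.det_toMatrix']
    congr 1
    ext i j
    rw [LinearMap.toMatrix'_apply]
    have hb : (fun j' : Fin n => if j' = j then (1:ℝ) else 0) = Pi.single j 1 := by
      funext j'; rw [Pi.single_apply]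
    simp [hb, hA_def, Pi.single_apply]
  -- F is C¹
  have hFc : ContDiff ℝ 1 F := by
    have hrw : F = fun q : ℝ × (Fin n → Fin n → ℝ) =>
        ∑ σ : Equiv.Perm (Fin n), ((Equiv.Perm.sign σ : ℤ) : ℝ) *
          ∏ i, ((if σ i = i then (1:ℝ) else 0) + q.1 * q.2 (σ i) i) := by
      funext q
      simp [hF_def, Matrix.det_apply']
    rw [hrw]
    apply ContDiff.sum
    intro σ _
    apply ContDiff.mul contDiff_const
    apply contDiff_prod
    intro i _
    refine ContDiff.add contDiff_const (contDiff_fst.mul ?_)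
    exact ((ContinuousLinearMap.proj i).comp ((ContinuousLinearMap.proj (σ i)).comp
      (ContinuousLinearMap.snd ℝ ℝ (Fin n → Fin n → ℝ)))).contDiff
  set L2 := fderiv ℝ F (0, A 0) with hL2_def
  have hstrict : HasStrictFDerivAt F L2 (0, A 0) := hFc.hasStrictFDerivAt one_ne_zero
  -- compute L2 (1, 0)
  set M0 : Matrix (Fin n) (Fin n) ℝ := Matrix.of (A 0) with hM0_def
  have hform : ∀ ε : ℝ, F (ε, A 0) = Matrix.det (1 + ε • M0) := by
    intro ε
    have hm : (Matrix.of fun i j => (if i = j then (1:ℝ) else 0) + ε * A 0 i j)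
        = 1 + ε • M0 := by
      ext i j
      simp [hM0_def, Matrix.one_apply, Matrix.add_apply, Matrix.smul_apply]
    simp only [hF_def]
    rw [hm]
  have hQ : ∀ ε : ℝ, F (ε, A 0) = 1 + Matrix.trace M0 * ε +
      Polynomial.eval ε (Matrix.det (1 + (Polynomial.X : Polynomial ℝ) •
        M0.map Polynomial.C)).divX.divX * ε ^ 2 := by
    intro ε; rw [hform ε, Matrix.det_one_add_smul]
  have hc : HasDerivAt (fun ε : ℝ => ((ε, A 0) : ℝ × (Fin n → Fin n → ℝ))) (1, 0) 0 :=
    (hasDerivAt_id 0).prodMk (hasDerivAt_const 0 (A 0))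
  have h1 : HasDerivAt (fun ε : ℝ => F (ε, A 0)) (L2 (1, 0)) 0 :=
    by have := hstrict.hasFDerivAt.comp_hasDerivAt 0 hc; exact this
  have h2 : HasDerivAt (fun ε : ℝ => F (ε, A 0)) (Matrix.trace M0) 0 := by
    rw [funext hQ]
    set Q := (Matrix.det (1 + (Polynomial.X : Polynomial ℝ) • M0.map Polynomial.C)).divX.divX
    have ha : HasDerivAt (fun ε : ℝ => Matrix.trace M0 * ε) (Matrix.trace M0) 0 := by
      simpa using (hasDerivAt_id (0:ℝ)).const_mul (Matrix.trace M0)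
    have hb : HasDerivAt (fun ε : ℝ => Polynomial.eval ε Q * ε ^ 2) 0 0 := by
      exact ((Q.hasDerivAt 0).mul (hasDerivAt_pow 2 (0:ℝ))).congr_deriv (by simp)
    exact ((ha.const_add 1).add hb).congr_deriv (by simp)
  have hL21 : L2 (1, 0) = Matrix.trace M0 := h1.unique h2
  -- continuity of A at 0
  have hgcont : ContinuousAt g 0 := hgderiv.continuousAt
  have hAcont : ContinuousAt A 0 := by
    apply continuousAt_pi.2; intro i; apply continuousAt_pi.2; intro j
    have h1' : Continuous fun T : (Fin n → ℝ) →L[ℝ] (Fin n → ℝ) => T (Pi.single j 1) i :=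
      (continuous_apply i).comp
        (ContinuousLinearMap.apply ℝ (Fin n → ℝ) (Pi.single j 1)).continuous
    exact h1'.continuousAt.comp (((he.continuous_fderiv one_ne_zero).continuousAt).comp hgcont)
  have hF0 : ∀ M : Fin n → Fin n → ℝ, F (0, M) = 1 := by
    intro M
    have : (Matrix.of fun i j => (if i = j then (1:ℝ) else 0) + (0:ℝ) * M i j)
        = (1 : Matrix (Fin n) (Fin n) ℝ) := by
      ext i j; simp [Matrix.one_apply]
    simp only [hF_def]
    rw [this, Matrix.det_one]
  -- derivative of ε ↦ F (ε, A ε) at 0 via strict differentiability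
  have hφ : HasDerivAt (fun ε => F (ε, A ε)) (L2 (1, 0)) 0 := by
    rw [hasDerivAt_iff_isLittleO]
    have htend : Filter.Tendsto (fun ε : ℝ => ((((ε, A ε) : ℝ × (Fin n → Fin n → ℝ)),
        ((0:ℝ), A ε)) : (ℝ × (Fin n → Fin n → ℝ)) × (ℝ × (Fin n → Fin n → ℝ))))
        (nhds 0) (nhds ((0, A 0), (0, A 0))) := by
      exact Filter.Tendsto.prodMk_nhds
        (Filter.Tendsto.prodMk_nhds Filter.tendsto_id hAcont)
        (Filter.Tendsto.prodMk_nhds tendsto_const_nhds hAcont)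
    have ho := hstrict.isLittleO.comp_tendsto htend
    have ho' : (fun ε : ℝ => F (ε, A ε) - 1 - ε • L2 (1, 0)) =o[nhds 0]
        fun ε : ℝ => ((ε, (0 : Fin n → Fin n → ℝ)) : ℝ × (Fin n → Fin n → ℝ)) := by
      refine ho.congr (fun ε => ?_) (fun ε => ?_)
      · have hsub : (((ε, A ε) : ℝ × (Fin n → Fin n → ℝ)) - (0, A ε))
            = ((ε • ((1,0) : ℝ × (Fin n → Fin n → ℝ)))) := by
          simp [Prod.ext_iff]
        simp only [Function.comp_apply]
        rw [hF0, hsub, _root_.map_smul]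
      · simp only [Function.comp_apply]
        simp [Prod.ext_iff]
    have hOB : (fun ε : ℝ => ((ε, (0 : Fin n → Fin n → ℝ)) : ℝ × (Fin n → Fin n → ℝ)))
        =O[nhds 0] fun ε : ℝ => ε := by
      apply Asymptotics.isBigO_iff.2
      refine ⟨1, Filter.Eventually.of_forall fun ε => ?_⟩
      simp [Prod.norm_def]
    have := ho'.trans_isBigO hOB
    simpa [hF0] using this
  -- assemble
  have hHeq : (fun ε => H ε x) = fun ε => f (g ε) * F (ε, A ε) :=
    funext fun ε => by rw [hH ε x, ← key ε]
  rw [hHeq]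
  have hprod := hfg.mul hφ
  refine hprod.congr_deriv ?_
  -- identify the derivative value
  have hpd1 : ∀ p : Fin n, pd n p (fun y => e y p) x = fderiv ℝ e x (Pi.single p 1) p := by
    intro p
    have hdiff := he.differentiable one_ne_zero x
    have hcomp0 : HasFDerivAt
        (⇑(ContinuousLinearMap.proj p : (Fin n → ℝ) →L[ℝ] ℝ) ∘ e)
        ((ContinuousLinearMap.proj p : (Fin n → ℝ) →L[ℝ] ℝ).comp (fderiv ℝ e x)) x :=
      (ContinuousLinearMap.proj p : (Fin n → ℝ) →L[ℝ] ℝ).hasFDerivAt.comp x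
        hdiff.hasFDerivAt
    have hcomp : HasFDerivAt (fun y => e y p)
        ((ContinuousLinearMap.proj p : (Fin n → ℝ) →L[ℝ] ℝ).comp (fderiv ℝ e x)) x := hcomp0
    rw [pd, hcomp.fderiv]; rfl
  have hpd2 : fderiv ℝ f x (e x) = ∑ p : Fin n, e x p * pd n p f x := by
    have hx : e x = ∑ p : Fin n, e x p • (Pi.single p 1 : Fin n → ℝ) := by
      funext j
      simp [Finset.sum_apply, Pi.single_apply]
    conv_lhs => rw [hx]
    simp [pd, smul_eq_mul]
  have htr : Matrix.trace M0 = ∑ p : Fin n, fderiv ℝ e x (Pi.single p 1) p := by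
    rw [Matrix.trace]
    apply Finset.sum_congr rfl
    intro p _
    simp [hM0_def, hA_def, Matrix.diag_apply, hg0]
  rw [hF0, hg0, hL21, htr, (fderiv ℝ f x).map_neg, hpd2]
  simp only [hpd1]
  ring
end
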